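/- For any period n and cycle length a ≥ 1 with n + a ≤ T, define the sets S_a = { y ∈ ℝ : Σ_{k=1}^{a} φ_{n,k}(y) ≥ a·p/(h+p) } and S_{a+1} = { y ∈ ℝ : Σ_{k=1}^{a+1} φ_{n,k}(y) ≥ (a+1)·p/(h+p) }. Then S_{a+1} ⊆ S_a; consequently, if S_{a+1} is nonempty and S_a is bounded below, then y_{n,a} = inf S_a ≤ inf S_{a+1} = y_{n,a+1}. -/

import Mathlib

open MeasureTheory ProbabilityTheory

/-- Accumulated demand `ξ_{n,k} = ξ_n + ⋯ + ξ_{n+k-1}`. -/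
noncomputable def acc {Ω : Type*} (ξ : ℕ → Ω → ℝ) (n k : ℕ) (ω : Ω) : ℝ :=
  ∑ i ∈ Finset.range k, ξ (n + i) ω

/-- Cumulative distribution function `φ_{n,k}(y) = P(ξ_{n,k} ≤ y)` of accumulated demand. -/
noncomputable def cdf {Ω : Type*} [MeasurableSpace Ω] (μ : Measure Ω) (ξ : ℕ → Ω → ℝ)
    (n k : ℕ) (y : ℝ) : ℝ :=
  (μ {ω | acc ξ n k ω ≤ y}).toReal

/-- Multi-period cost function
`L_{n,a}(y) = Σ_{k=1}^{a} (h·E[(y − ξ_{n,k})⁺] + p·E[(ξ_{n,k} − y)⁺])`. -/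
noncomputable def Lmp {Ω : Type*} [MeasurableSpace Ω] (μ : Measure Ω) (h p : ℝ)
    (ξ : ℕ → Ω → ℝ) (n a : ℕ) (y : ℝ) : ℝ :=
  ∑ k ∈ Finset.Icc 1 a,
    (h * ∫ ω, max (y - acc ξ n k ω) 0 ∂μ + p * ∫ ω, max (acc ξ n k ω - y) 0 ∂μ)

lemma cdf_anti_aux {Ω : Type*} [MeasurableSpace Ω] (μ : Measure Ω) [IsProbabilityMeasure μ]
    (ξ : ℕ → Ω → ℝ) (hpos : ∀ i, ∀ᵐ ω ∂μ, 0 ≤ ξ i ω) (n : ℕ) {k m : ℕ} (hkm : k ≤ m)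
    (y : ℝ) : cdf μ ξ n m y ≤ cdf μ ξ n k y := by
  have hae : ∀ᵐ ω ∂μ, ∀ i, 0 ≤ ξ i ω := (MeasureTheory.ae_all_iff).2 hpos
  have hmono : ∀ᵐ ω ∂μ, acc ξ n k ω ≤ acc ξ n m ω := by
    filter_upwards [hae] with ω hω
    exact Finset.sum_le_sum_of_subset_of_nonneg
      (Finset.range_subset_range.2 hkm) (fun i _ _ => hω (n + i))
  have hμ : μ {ω | acc ξ n m ω ≤ y} ≤ μ {ω | acc ξ n k ω ≤ y} := by
    apply measure_mono_ae
    filter_upwards [hmono] with ω hω hm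
    exact le_trans hω hm
  exact ENNReal.toReal_mono (measure_ne_top μ _) hμ

/-- Proposition 1(c): `S_{a+1} ⊆ S_a`, and consequently, if `S_{a+1}` is nonempty and
`S_a` is bounded below, then `y_{n,a} = inf S_a ≤ inf S_{a+1} = y_{n,a+1}`. -/
theorem stmt2 {Ω : Type*} [MeasurableSpace Ω] (μ : Measure Ω) [IsProbabilityMeasure μ]
    (T : ℕ) (ξ : ℕ → Ω → ℝ)
    (hmeas : ∀ i, Measurable (ξ i)) (hint : ∀ i, Integrable (ξ i) μ)
    (hpos : ∀ i, ∀ᵐ ω ∂μ, 0 ≤ ξ i ω)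
    (hind : iIndepFun ξ μ)
    (h p : ℝ) (hh : 0 < h) (hp : 0 < p)
    (n a : ℕ) (hn : 1 ≤ n) (ha : 1 ≤ a) (hna : n + a ≤ T) :
    {y : ℝ | ((a : ℝ) + 1) * p / (h + p) ≤ ∑ k ∈ Finset.Icc 1 (a + 1), cdf μ ξ n k y} ⊆
      {y : ℝ | (a : ℝ) * p / (h + p) ≤ ∑ k ∈ Finset.Icc 1 a, cdf μ ξ n k y} ∧
    ({y : ℝ | ((a : ℝ) + 1) * p / (h + p) ≤
        ∑ k ∈ Finset.Icc 1 (a + 1), cdf μ ξ n k y}.Nonempty →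
      BddBelow {y : ℝ | (a : ℝ) * p / (h + p) ≤ ∑ k ∈ Finset.Icc 1 a, cdf μ ξ n k y} →
      sInf {y : ℝ | (a : ℝ) * p / (h + p) ≤ ∑ k ∈ Finset.Icc 1 a, cdf μ ξ n k y} ≤
        sInf {y : ℝ | ((a : ℝ) + 1) * p / (h + p) ≤
          ∑ k ∈ Finset.Icc 1 (a + 1), cdf μ ξ n k y}) := by
  have hc : 0 ≤ p / (h + p) := div_nonneg hp.le (by linarith)
  have hsub : {y : ℝ | ((a : ℝ) + 1) * p / (h + p) ≤ ∑ k ∈ Finset.Icc 1 (a + 1), cdf μ ξ n k y} ⊆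
      {y : ℝ | (a : ℝ) * p / (h + p) ≤ ∑ k ∈ Finset.Icc 1 a, cdf μ ξ n k y} := by
    intro y hy
    simp only [Set.mem_setOf_eq] at hy ⊢
    set c : ℝ := p / (h + p) with hcdef
    have hsplit : ∑ k ∈ Finset.Icc 1 (a + 1), cdf μ ξ n k y
        = (∑ k ∈ Finset.Icc 1 a, cdf μ ξ n k y) + cdf μ ξ n (a + 1) y :=
      Finset.sum_Icc_succ_top (by omega) _
    have hbig : ((a : ℝ) + 1) * cdf μ ξ n (a + 1) y ≤ ∑ k ∈ Finset.Icc 1 (a + 1), cdf μ ξ n k y := by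
      have := Finset.sum_le_sum (f := fun _ : ℕ => cdf μ ξ n (a + 1) y)
        (g := fun k => cdf μ ξ n k y) (s := Finset.Icc 1 (a + 1))
        (fun k hk => cdf_anti_aux μ ξ hpos n (Finset.mem_Icc.mp hk).2 y)
      simpa [Finset.sum_const, Nat.card_Icc, mul_comm] using this
    have hy' : ((a : ℝ) + 1) * c ≤ ∑ k ∈ Finset.Icc 1 (a + 1), cdf μ ξ n k y := by
      rw [hcdef, ← mul_div_assoc]; exact hy
    rw [show (a : ℝ) * p / (h + p) = (a : ℝ) * c by rw [hcdef, mul_div_assoc]]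
    have ha1 : (1 : ℝ) ≤ (a : ℝ) := by exact_mod_cast ha
    nlinarith [hsplit, hbig, hy', mul_le_mul_of_nonneg_left hy' (by linarith : (0:ℝ) ≤ (a:ℝ))]
  refine ⟨hsub, fun hne hbdd => csInf_le_csInf hbdd hne hsub⟩
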